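/- arXiv:2303.12182 — 5 statements merged into one kernel-verified Lean document; each statement's English description precedes it below -/
import Mathlib

section
/- Let α ≥ 0 and β, γ > 0, let F : ℝ × ℝ → ℝ be differentiable at (θ(t), d(t)), and let θ, d : ℝ → ℝ satisfy the closed-loop dynamics at time t: θ has derivative γ·F(θ(t),d(t)) at t and d has derivative β·exp(−α·F(θ(t),d(t))²)·sin(θ(t)) at t. Write Fθ and Fd for the partial derivatives of F at (θ(t),d(t)) and write F₀ = F(θ(t),d(t)). If Fθ < 0 and |Fθ|·γ·|F₀| > |Fd|·β·exp(−α·F₀²)·|sin(θ(t))|, then the function V : s ↦ (1/2)·F(θ(s),d(s))² has strictly negative derivative at t. -/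
/-- Sufficient condition for decrease of the Lyapunov-like
function.  With `α ≥ 0`, `β, γ > 0`, `F` differentiable at `(θ t, d t)` with
total derivative `L` (partial derivatives `Fθ = L (1,0)`, `Fd = L (0,1)`),
`F₀ = F (θ t, d t)`, and `θ, d` satisfying the closed-loop dynamics at time
`t`, if `Fθ < 0` and `|Fθ|·γ·|F₀| > |Fd|·β·exp(−α F₀²)·|sin (θ t)|`, then
`V : s ↦ (1/2)·F(θ s, d s)²` has strictly negative derivative at `t`. -/
theorem stmt2 (α β γ : ℝ) (hα : 0 ≤ α) (hβ : 0 < β) (hγ : 0 < γ)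
    (F : ℝ × ℝ → ℝ) (θ d : ℝ → ℝ) (t : ℝ)
    (L : ℝ × ℝ →L[ℝ] ℝ) (hF : HasFDerivAt F L (θ t, d t))
    (hθ : HasDerivAt θ (γ * F (θ t, d t)) t)
    (hd : HasDerivAt d (β * Real.exp (-α * F (θ t, d t) ^ 2) * Real.sin (θ t)) t)
    (hFθneg : L (1, 0) < 0)
    (hcond : |L (1, 0)| * γ * |F (θ t, d t)| >
      |L (0, 1)| * β * Real.exp (-α * F (θ t, d t) ^ 2) * |Real.sin (θ t)|) :
    deriv (fun s => (1 / 2) * F (θ s, d s) ^ 2) t < 0 := by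
  set F₀ := F (θ t, d t) with hF₀
  set e := Real.exp (-α * F₀ ^ 2) with he
  set s := Real.sin (θ t) with hs
  have hpair : HasDerivAt (fun u => (θ u, d u)) (γ * F₀, β * e * s) t := hθ.prodMk hd
  have hg : HasDerivAt (fun u => F (θ u, d u)) (L (γ * F₀, β * e * s)) t :=
    hF.comp_hasDerivAt t hpair
  have hL : L (γ * F₀, β * e * s) = γ * F₀ * L (1, 0) + β * e * s * L (0, 1) := by
    have : (γ * F₀, β * e * s) = (γ * F₀) • ((1 : ℝ), (0 : ℝ)) + (β * e * s) • ((0 : ℝ), (1 : ℝ)) := by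
      simp [Prod.ext_iff]
    rw [this, map_add, map_smul, map_smul]; simp [smul_eq_mul]
  have hV : HasDerivAt (fun u => (1 / 2) * F (θ u, d u) ^ 2)
      (F₀ * (γ * F₀ * L (1, 0) + β * e * s * L (0, 1))) t := by
    have := (hg.fun_pow 2).const_mul (1 / 2 : ℝ)
    rw [hL] at this
    refine this.congr_deriv ?_
    ring
  rw [hV.deriv]
  -- arithmetic
  have habs1 : |L (1, 0)| = -L (1, 0) := abs_of_neg hFθneg
  have hRHS : 0 ≤ |L (0,1)| * β * e * |s| := by
    have : 0 < e := Real.exp_pos _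
    positivity
  have h1 : 0 < |L (1, 0)| * γ * |F₀| := lt_of_le_of_lt hRHS hcond
  have hF0pos : 0 < |F₀| := by
    by_contra h
    push_neg at h
    have h0 : |F₀| = 0 := le_antisymm h (abs_nonneg _)
    rw [h0, mul_zero] at h1
    exact lt_irrefl 0 h1
  have key : F₀ * (β * e * s * L (0, 1)) ≤ |F₀| * (|L (0,1)| * β * e * |s|) := by
    calc F₀ * (β * e * s * L (0, 1)) ≤ |F₀ * (β * e * s * L (0, 1))| := le_abs_self _
    _ = |F₀| * (|L (0,1)| * β * e * |s|) := by
        rw [abs_mul, abs_mul, abs_mul, abs_mul, abs_of_pos hβ,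
          abs_of_pos (Real.exp_pos _)]; ring
  have hsq : F₀ * (γ * F₀ * L (1, 0)) = -(γ * |F₀| * |F₀| * |L (1,0)|) := by
    have h2 : |F₀| * |F₀| = F₀ * F₀ := abs_mul_abs_self F₀
    rw [habs1]
    linear_combination (-(γ * L (1, 0))) * h2
  have : |F₀| * (|L (0,1)| * β * e * |s|) < |F₀| * (|L (1, 0)| * γ * |F₀|) := by
    apply mul_lt_mul_of_pos_left _ hF0pos
    linarith
  nlinarith [key, hsq, this]
end

section
/- Let α ≥ 0, β, γ > 0 and let X ⊆ ℝ × ℝ. Suppose F : ℝ × ℝ → ℝ is differentiable on X and there are constants m, M > 0 such that at every point of X the partial derivative Fθ of F with respect to its first argument satisfies Fθ < 0 and |Fθ| ≥ m, while the partial derivative Fd of F with respect to its second argument satisfies |Fd| ≤ M. Set c = (β·M)/(γ·m). Then for any functions θ, d : ℝ → ℝ satisfying the closed-loop dynamics at a time t (θ has derivative γ·F(θ(t),d(t)) at t and d has derivative β·exp(−α·F(θ(t),d(t))²)·sin(θ(t)) at t) with (θ(t), d(t)) ∈ X and |F(θ(t), d(t))| > c, the function V : s ↦ (1/2)·F(θ(s),d(s))²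 has strictly negative derivative at t. -/
/-- Decrease of the Lyapunov-like function outside a sublevel
set.  With `α ≥ 0`, `β, γ > 0`, suppose `F` is differentiable at every point
of `X` with total derivative `Fder p` (partial derivatives `Fder p (1,0)` and
`Fder p (0,1)`), where `Fder p (1,0) < 0`, `|Fder p (1,0)| ≥ m` and
`|Fder p (0,1)| ≤ M` on `X` for constants `m, M > 0`.  Set `c = β·M/(γ·m)`.
Then for any solution of the closed-loop dynamics at time `t` with
`(θ t, d t) ∈ X` and `|F (θ t, d t)| > c`, the Lyapunov-like function
`V : s ↦ (1/2)·F(θ s, d s)²` has strictly negative derivative at `t`. -/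
theorem stmt3 (α β γ m M : ℝ) (hα : 0 ≤ α) (hβ : 0 < β) (hγ : 0 < γ)
    (hm : 0 < m) (hM : 0 < M)
    (X : Set (ℝ × ℝ)) (F : ℝ × ℝ → ℝ) (Fder : ℝ × ℝ → (ℝ × ℝ →L[ℝ] ℝ))
    (hFdiff : ∀ p ∈ X, HasFDerivAt F (Fder p) p)
    (hFθneg : ∀ p ∈ X, Fder p (1, 0) < 0)
    (hFθm : ∀ p ∈ X, m ≤ |Fder p (1, 0)|)
    (hFdM : ∀ p ∈ X, |Fder p (0, 1)| ≤ M)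
    (θ d : ℝ → ℝ) (t : ℝ)
    (hθ : HasDerivAt θ (γ * F (θ t, d t)) t)
    (hd : HasDerivAt d (β * Real.exp (-α * F (θ t, d t) ^ 2) * Real.sin (θ t)) t)
    (hmem : (θ t, d t) ∈ X)
    (hbig : |F (θ t, d t)| > β * M / (γ * m)) :
    deriv (fun s => (1 / 2) * F (θ s, d s) ^ 2) t < 0 := by
  set p : ℝ × ℝ := (θ t, d t) with hp
  set f : ℝ := F p with hf
  set E : ℝ := Real.exp (-α * f ^ 2) with hE
  set a : ℝ := Fder p (1, 0) with ha
  set b : ℝ := Fder p (0, 1) with hb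
  have hpd : HasDerivAt (fun s => (θ s, d s)) (γ * f, β * E * Real.sin (θ t)) t :=
    hθ.prodMk hd
  have hcomp : HasDerivAt (fun s => F (θ s, d s))
      (Fder p (γ * f, β * E * Real.sin (θ t))) t :=
    (hFdiff p hmem).comp_hasDerivAt t hpd
  have hval : Fder p (γ * f, β * E * Real.sin (θ t))
      = (γ * f) * a + (β * E * Real.sin (θ t)) * b := by
    have : (γ * f, β * E * Real.sin (θ t))
        = (γ * f) • ((1 : ℝ), (0 : ℝ)) + (β * E * Real.sin (θ t)) • ((0 : ℝ), (1 : ℝ)) := by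
      simp [Prod.ext_iff]
    rw [this, map_add, map_smul, map_smul]
    simp [ha, hb, smul_eq_mul]
  rw [hval] at hcomp
  have hV : HasDerivAt (fun s => (1 / 2) * F (θ s, d s) ^ 2)
      ((1 / 2) * (2 * f ^ 1 * ((γ * f) * a + (β * E * Real.sin (θ t)) * b))) t := by
    exact ((hcomp.pow 2).const_mul (1 / 2))
  rw [hV.deriv]
  -- bounds
  have haneg : a < 0 := hFθneg p hmem
  have ham : m ≤ -a := by have := hFθm p hmem; rwa [abs_of_neg haneg] at this
  have hbM : |b| ≤ M := hFdM p hmem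
  have hE1 : E ≤ 1 := by
    rw [hE]
    apply Real.exp_le_one_iff.mpr
    nlinarith [sq_nonneg f]
  have hE0 : 0 < E := Real.exp_pos _
  have hs : |Real.sin (θ t)| ≤ 1 := Real.abs_sin_le_one _
  set k := |f| with hk
  have hk0 : 0 < k := lt_trans (by positivity) hbig
  have hbigk : β * M < γ * m * k := by
    rw [gt_iff_lt, div_lt_iff₀ (by positivity)] at hbig
    nlinarith
  have hcross : f * ((β * E * Real.sin (θ t)) * b) ≤ β * M * k := by
    calc f * ((β * E * Real.sin (θ t)) * b) ≤ |f * ((β * E * Real.sin (θ t)) * b)| :=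
          le_abs_self _
      _ = k * (β * E * |Real.sin (θ t)| * |b|) := by
          rw [abs_mul, abs_mul, abs_mul, abs_mul, abs_of_pos hβ, abs_of_pos hE0]
          try ring
      _ ≤ k * (β * 1 * 1 * M) := by
          apply mul_le_mul_of_nonneg_left _ hk0.le
          have hEs : E * |Real.sin (θ t)| ≤ 1 :=
            mul_le_one₀ hE1 (abs_nonneg _) hs
          have h3 : (E * |Real.sin (θ t)|) * |b| ≤ 1 * M :=
            mul_le_mul hEs hbM (abs_nonneg b) zero_le_one
          nlinarith [h3, hβ]
      _ = β * M * k := by ring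
  have hsq : f ^ 2 = k ^ 2 := (sq_abs f).symm
  clear_value k
  clear hk
  have hmain : f * ((γ * f) * a) ≤ -(γ * m) * k ^ 2 := by
    have h2 : γ * (f * f) * a ≤ γ * (f * f) * (-m) :=
      mul_le_mul_of_nonneg_left (by linarith)
        (mul_nonneg hγ.le (mul_self_nonneg f))
    have hsq' : γ * m * f ^ 2 = γ * m * k ^ 2 := by rw [hsq]
    nlinarith [h2, hsq']
  nlinarith [hcross, hmain, hbigk, hk0]
end

section
/- Let γ, F̲, β' > 0 and T > 0, and let θ, d : [0,T] → ℝ be differentiable functions such that for all t ∈ [0,T]: θ(t) ∈ [0, π], θ'(t) ≤ −γ·F̲, d'(t) ≤ β'·sin(θ(t)), and θ(T) = 0. Then d(T) ≤ d(0) + (β'/(γ·F̲))·(1 − cos(θ(0))). -/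
/-- Bound on the rise of the offset distance `d`.  Let
`γ, F̲, β' > 0` and `T > 0`, and let `θ, d` be differentiable on `[0,T]` with
`θ t ∈ [0, π]`, `θ' t ≤ −γ·F̲` and `d' t ≤ β'·sin (θ t)` on `[0,T]`, and
`θ T = 0`.  Then `d T ≤ d 0 + (β'/(γ·F̲))·(1 − cos (θ 0))`. -/
theorem stmt6 (γ Flow β' T : ℝ) (hγ : 0 < γ) (hFlow : 0 < Flow)
    (hβ' : 0 < β') (hT : 0 < T)
    (θ d θ' d' : ℝ → ℝ)
    (hθdiff : ∀ t ∈ Set.Icc (0 : ℝ) T, HasDerivAt θ (θ' t) t)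
    (hddiff : ∀ t ∈ Set.Icc (0 : ℝ) T, HasDerivAt d (d' t) t)
    (hθrange : ∀ t ∈ Set.Icc (0 : ℝ) T, θ t ∈ Set.Icc (0 : ℝ) Real.pi)
    (hθ' : ∀ t ∈ Set.Icc (0 : ℝ) T, θ' t ≤ -(γ * Flow))
    (hd' : ∀ t ∈ Set.Icc (0 : ℝ) T, d' t ≤ β' * Real.sin (θ t))
    (hθT : θ T = 0) :
    d T ≤ d 0 + (β' / (γ * Flow)) * (1 - Real.cos (θ 0)) := by
  set c : ℝ := β' / (γ * Flow) with hc
  have hγF : 0 < γ * Flow := mul_pos hγ hFlow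
  have hcpos : 0 < c := div_pos hβ' hγF
  set g : ℝ → ℝ := fun t => d t - c * Real.cos (θ t) with hg
  have hgderiv : ∀ t ∈ Set.Icc (0 : ℝ) T,
      HasDerivAt g (d' t - c * (-Real.sin (θ t) * θ' t)) t := by
    intro t ht
    exact (hddiff t ht).sub
      ((((hθdiff t ht).cos)).const_mul c)
  have hmono : g T ≤ g 0 := by
    have hanti : AntitoneOn g (Set.Icc 0 T) := by
      apply antitoneOn_of_deriv_nonpos (convex_Icc 0 T)
      · exact fun t ht => (hgderiv t ht).continuousAt.continuousWithinAt
      · intro t ht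
        rw [interior_Icc] at ht
        exact (hgderiv t (Set.mem_Icc_of_Ioo ht)).differentiableAt.differentiableWithinAt
      · intro t ht
        rw [interior_Icc] at ht
        have ht' : t ∈ Set.Icc (0 : ℝ) T := Set.mem_Icc_of_Ioo ht
        rw [(hgderiv t ht').deriv]
        have hsin : 0 ≤ Real.sin (θ t) :=
          Real.sin_nonneg_of_mem_Icc (hθrange t ht')
        have h1 : d' t ≤ β' * Real.sin (θ t) := hd' t ht'
        have h2 : c * (Real.sin (θ t) * (γ * Flow)) ≤
            c * (-(Real.sin (θ t) * θ' t)) := by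
          apply mul_le_mul_of_nonneg_left _ hcpos.le
          have := hθ' t ht'
          nlinarith
        have hcval : c * (Real.sin (θ t) * (γ * Flow)) = β' * Real.sin (θ t) := by
          field_simp [hc]
          rw [hc]; field_simp
        nlinarith [h2, hcval]
    exact hanti (Set.left_mem_Icc.mpr hT.le) (Set.right_mem_Icc.mpr hT.le) hT.le
  have : d T - c * Real.cos (θ T) ≤ d 0 - c * Real.cos (θ 0) := hmono
  rw [hθT, Real.cos_zero] at this
  linarith [this]
end

section
/- Let γ, F̲, β' > 0, let 0 < θ̄ and 0 < d̄, and let T > 0. Let θ, d : [0,T] → ℝ be differentiable functions such that for all t ∈ [0,T]: θ(t) ∈ [0, π], θ'(t) ≤ −γ·F̲, d'(t) ≤ β'·sin(θ(t)); suppose θ(0) = θ₀ ∈ (0, θ̄), d(0) = −(d̄/θ̄)·θ₀ + d̄, and θ(T) = 0. If β'/γ < (d̄·F̲)/θ̄, then d(T) < d̄. -/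
lemma deriv_le_bound (T C : ℝ) (hT : 0 ≤ T) (f f' : ℝ → ℝ)
    (hf : ∀ t ∈ Set.Icc (0 : ℝ) T, HasDerivAt f (f' t) t)
    (hle : ∀ t ∈ Set.Icc (0 : ℝ) T, f' t ≤ C) :
    f T - f 0 ≤ C * T := by
  set g : ℝ → ℝ := fun t => C * t - f t with hg
  have hgderiv : ∀ t ∈ Set.Icc (0 : ℝ) T, HasDerivAt g (C - f' t) t := by
    intro t ht
    have h := ((hasDerivAt_id t).const_mul C).sub (hf t ht)
    simp only [mul_one] at h
    exact h
  have hmono : MonotoneOn g (Set.Icc (0 : ℝ) T) := by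
    apply monotoneOn_of_deriv_nonneg (convex_Icc 0 T)
    · exact fun t ht => (hgderiv t ht).continuousAt.continuousWithinAt
    · intro t ht
      exact ((hgderiv t (interior_subset ht)).differentiableAt).differentiableWithinAt
    · intro t ht
      have ht' : t ∈ Set.Icc (0 : ℝ) T := interior_subset ht
      rw [(hgderiv t ht').deriv]
      linarith [hle t ht']
  have := hmono (Set.left_mem_Icc.mpr hT) (Set.right_mem_Icc.mpr hT) hT
  simp only [hg, mul_zero] at this
  linarith

/-- d-axis crossing below `(0, d̄)`.  Let `γ, F̲, β' > 0`,
`θ̄, d̄ > 0` and `T > 0`.  Let `θ, d` be differentiable on `[0,T]` with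
`θ t ∈ [0, π]`, `θ' t ≤ −γ·F̲` and `d' t ≤ β'·sin (θ t)` on `[0,T]`, starting
on the line segment `d 0 = −(d̄/θ̄)·θ₀ + d̄` with `θ 0 = θ₀ ∈ (0, θ̄)`, and
reaching `θ T = 0`.  If `β'/γ < d̄·F̲/θ̄`, then `d T < d̄`. -/
theorem stmt7 (γ Flow β' θbar dbar T θ₀ : ℝ)
    (hγ : 0 < γ) (hFlow : 0 < Flow) (hβ' : 0 < β')
    (hθbar : 0 < θbar) (hdbar : 0 < dbar) (hT : 0 < T)
    (θ d θ' d' : ℝ → ℝ)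
    (hθdiff : ∀ t ∈ Set.Icc (0 : ℝ) T, HasDerivAt θ (θ' t) t)
    (hddiff : ∀ t ∈ Set.Icc (0 : ℝ) T, HasDerivAt d (d' t) t)
    (hθrange : ∀ t ∈ Set.Icc (0 : ℝ) T, θ t ∈ Set.Icc (0 : ℝ) Real.pi)
    (hθ' : ∀ t ∈ Set.Icc (0 : ℝ) T, θ' t ≤ -(γ * Flow))
    (hd' : ∀ t ∈ Set.Icc (0 : ℝ) T, d' t ≤ β' * Real.sin (θ t))
    (hθ0 : θ 0 = θ₀) (hθ₀mem : θ₀ ∈ Set.Ioo (0 : ℝ) θbar)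
    (hd0 : d 0 = -(dbar / θbar) * θ₀ + dbar)
    (hθT : θ T = 0)
    (hparam : β' / γ < dbar * Flow / θbar) :
    d T < dbar := by
  obtain ⟨hθ₀pos, hθ₀lt⟩ := hθ₀mem
  -- bound T : γ * Flow * T ≤ θ₀
  have hθbound : θ T - θ 0 ≤ -(γ * Flow) * T :=
    deriv_le_bound T (-(γ * Flow)) hT.le θ θ' hθdiff hθ'
  rw [hθT, hθ0] at hθbound
  have hTbound : γ * Flow * T ≤ θ₀ := by nlinarith
  -- bound d
  have hdbound : d T - d 0 ≤ β' * T := by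
    apply deriv_le_bound T β' hT.le d d' hddiff
    intro t ht
    have h1 := hd' t ht
    have h2 : Real.sin (θ t) ≤ 1 := Real.sin_le_one _
    nlinarith
  rw [hd0] at hdbound
  -- from hparam : β' * θbar < dbar * Flow * γ
  have hkey : β' * θbar < dbar * Flow * γ := by
    rw [div_lt_div_iff₀ hγ hθbar] at hparam
    linarith
  have hβT : β' * T < dbar / θbar * θ₀ := by
    have h1 : β' * T ≤ β' * θ₀ / (γ * Flow) := by
      rw [le_div_iff₀ (by positivity)]
      nlinarith
    have h2 : β' * θ₀ / (γ * Flow) < dbar / θbar * θ₀ := by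
      have heq : dbar / θbar * θ₀ = dbar * θ₀ / θbar := by ring
      rw [heq, div_lt_div_iff₀ (by positivity) hθbar]
      nlinarith
    linarith
  linarith
end

section
/- Let θ̲, d̲ < 0 < θ̄, d̄ with θ̲, θ̄ ∈ (−π, π), and let X = (θ̲, θ̄) × (d̲, d̄) ⊆ ℝ × ℝ. Let F : ℝ × ℝ → ℝ be continuously differentiable on X with F(0,0) = 0 and with both partial derivatives (with respect to the first and the second argument) strictly negative at every point of X. Then for every ε > 0 there exist δ > 0, α ≥ 0 and β, γ > 0 such that: for any differentiable functions θ, d : [0,∞) → ℝ satisfying, for all t ≥ 0, (θ(t), d(t)) ∈ X, θ'(t) = γ·F(θ(t), d(t)) and d'(t) = β·exp(−α·F(θ(t),d(t))²)·sin(θ(t)), if max(|θ(0)|, |d(0)|) < δ then max(|θ(t)|, |d(t)|) < ε for all t ≥ 0. -/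
open Set intervalIntegral MeasureTheory

/-- Lyapunov stability of the origin for the closed-loop
mobile-robot system.  Let `X = (θ̲, θ̄) × (d̲, d̄)` with
`θ̲, d̲ < 0 < θ̄, d̄` and `θ̲, θ̄ ∈ (−π, π)`.  Let `F` be continuously
differentiable on `X`, vanish at the origin, and have strictly negative
partial derivatives in each argument at every point of `X`.  Then for every
`ε > 0` there exist `δ > 0`, `α ≥ 0` and `β, γ > 0` such that every solution
of the closed-loop dynamics staying in `X` that starts in the `∞`-ball of
radius `δ` about the origin remains in the `∞`-ball of radius `ε` for all
`t ≥ 0`. -/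
theorem stmt12 (θlow θbar dlow dbar : ℝ)
    (hθlow : θlow < 0) (hθbar : 0 < θbar) (hdlow : dlow < 0) (hdbar : 0 < dbar)
    (hθlowπ : -Real.pi < θlow) (hθbarπ : θbar < Real.pi)
    (F : ℝ × ℝ → ℝ)
    (X : Set (ℝ × ℝ)) (hX : X = Set.Ioo θlow θbar ×ˢ Set.Ioo dlow dbar)
    (hC1 : ContDiffOn ℝ 1 F X)
    (hF0 : F (0, 0) = 0)
    (hFθ : ∀ p ∈ X, deriv (fun x : ℝ => F (x, p.2)) p.1 < 0)
    (hFd : ∀ p ∈ X, deriv (fun y : ℝ => F (p.1, y)) p.2 < 0) :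
    ∀ ε : ℝ, 0 < ε →
      ∃ δ : ℝ, 0 < δ ∧ ∃ α : ℝ, 0 ≤ α ∧ ∃ β γ : ℝ, 0 < β ∧ 0 < γ ∧
        ∀ θ d : ℝ → ℝ,
          (∀ t : ℝ, 0 ≤ t → (θ t, d t) ∈ X) →
          (∀ t : ℝ, 0 ≤ t → HasDerivAt θ (γ * F (θ t, d t)) t) →
          (∀ t : ℝ, 0 ≤ t →
            HasDerivAt d
              (β * Real.exp (-α * F (θ t, d t) ^ 2) * Real.sin (θ t)) t) →
          max |θ 0| |d 0| < δ →
          ∀ t : ℝ, 0 ≤ t → max |θ t| |d t| < ε := by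
  intro ε hε
  have hπ : (0 : ℝ) < Real.pi := Real.pi_pos
  -- the radius r
  set m : ℝ := min ε (min θbar (min (-θlow) (min dbar (-dlow)))) with hm_def
  have hm0 : 0 < m := by
    simp only [hm_def, lt_min_iff]
    exact ⟨hε, hθbar, by linarith, hdbar, by linarith⟩
  set r : ℝ := m / 2 with hr_def
  have hr0 : 0 < r := by positivity
  have hrε : r < ε := by
    have : m ≤ ε := min_le_left _ _
    simp only [hr_def]; linarith
  have hrθbar : r < θbar := by
    have : m ≤ θbar := le_trans (min_le_right _ _) (min_le_left _ _)
    simp only [hr_def]; linarith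
  have hrθlow : θlow < -r := by
    have : m ≤ -θlow := le_trans (min_le_right _ _) (le_trans (min_le_right _ _) (min_le_left _ _))
    simp only [hr_def]; linarith
  have hrdbar : r < dbar := by
    have : m ≤ dbar := le_trans (min_le_right _ _) (le_trans (min_le_right _ _)
      (le_trans (min_le_right _ _) (min_le_left _ _)))
    simp only [hr_def]; linarith
  have hrdlow : dlow < -r := by
    have : m ≤ -dlow := le_trans (min_le_right _ _) (le_trans (min_le_right _ _)
      (le_trans (min_le_right _ _) (min_le_right _ _)))
    simp only [hr_def]; linarith
  have hrπ : r < Real.pi := lt_trans hrθbar hθbarπ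
  -- membership helpers
  have hmemX : ∀ x y : ℝ, x ∈ Set.Ioo θlow θbar → y ∈ Set.Ioo dlow dbar → (x, y) ∈ X := by
    intro x y hx hy; rw [hX]; exact ⟨hx, hy⟩
  have hmemX' : ∀ p : ℝ × ℝ, p ∈ X → p.1 ∈ Set.Ioo θlow θbar ∧ p.2 ∈ Set.Ioo dlow dbar := by
    intro p hp; rw [hX] at hp; exact ⟨hp.1, hp.2⟩
  have h0θ : (0 : ℝ) ∈ Set.Ioo θlow θbar := ⟨hθlow, hθbar⟩
  have h0d : (0 : ℝ) ∈ Set.Ioo dlow dbar := ⟨hdlow, hdbar⟩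
  -- the function g s = F (0, s) and its properties
  set g : ℝ → ℝ := fun s => F (0, s) with hg_def
  have hgcont : ContinuousOn g (Set.Ioo dlow dbar) := by
    have : ContinuousOn (fun s : ℝ => ((0 : ℝ), s)) (Set.Ioo dlow dbar) :=
      (continuous_const.prodMk continuous_id).continuousOn
    exact hC1.continuousOn.comp this (fun s hs => hmemX 0 s h0θ hs)
  have hganti : StrictAntiOn g (Set.Ioo dlow dbar) := by
    apply strictAntiOn_of_deriv_neg (convex_Ioo _ _) hgcont
    intro x hx
    rw [interior_Ioo] at hx
    exact hFd (0, x) (hmemX 0 x h0θ hx)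
  have hg0 : g 0 = 0 := hF0
  have hgneg : ∀ s ∈ Set.Ioo dlow dbar, 0 < s → g s < 0 := by
    intro s hs hs0
    have := hganti h0d hs hs0
    rwa [hg0] at this
  have hgpos : ∀ s ∈ Set.Ioo dlow dbar, s < 0 → 0 < g s := by
    intro s hs hs0
    have := hganti hs h0d hs0
    rwa [hg0] at this
  -- strict antitonicity of θ ↦ F (θ, y)
  have hθanti : ∀ y ∈ Set.Ioo dlow dbar, StrictAntiOn (fun x => F (x, y)) (Set.Ioo θlow θbar) := by
    intro y hy
    apply strictAntiOn_of_deriv_neg (convex_Ioo _ _)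
    · have : ContinuousOn (fun x : ℝ => (x, y)) (Set.Ioo θlow θbar) :=
        (continuous_id.prodMk continuous_const).continuousOn
      exact hC1.continuousOn.comp this (fun x hx => hmemX x y hx hy)
    · intro x hx
      rw [interior_Ioo] at hx
      exact hFθ (x, y) (hmemX x y hx hy)
  -- the key sign inequality
  have hkey : ∀ x ∈ Set.Ioo θlow θbar, ∀ y ∈ Set.Ioo dlow dbar,
      Real.sin x * (F (x, y) - F (0, y)) ≤ 0 := by
    intro x hx y hy
    rcases lt_trichotomy x 0 with hx0 | hx0 | hx0
    · have hsin : Real.sin x < 0 :=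
        Real.sin_neg_of_neg_of_neg_pi_lt hx0 (lt_trans hθlowπ hx.1)
      have hF : F (0, y) < F (x, y) := hθanti y hy hx h0θ hx0
      exact mul_nonpos_of_nonpos_of_nonneg hsin.le (by linarith)
    · simp [hx0]
    · have hsin : 0 < Real.sin x :=
        Real.sin_pos_of_pos_of_lt_pi hx0 (lt_trans hx.2 hθbarπ)
      have hF : F (x, y) < F (0, y) := hθanti y hy h0θ hx hx0
      exact mul_nonpos_of_nonneg_of_nonpos hsin.le (by linarith)
  -- the integrand and potential H
  set f0 : ℝ → ℝ := fun s => -(g s) with hf0_def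
  have hf0cont : ContinuousOn f0 (Set.Ioo dlow dbar) := hgcont.neg
  have hsub : ∀ a b : ℝ, a ∈ Set.Ioo dlow dbar → b ∈ Set.Ioo dlow dbar →
      Set.uIcc a b ⊆ Set.Ioo dlow dbar := by
    intro a b ha hb
    exact (Set.ordConnected_Ioo).uIcc_subset ha hb
  have hf0int : ∀ a b : ℝ, a ∈ Set.Ioo dlow dbar → b ∈ Set.Ioo dlow dbar →
      IntervalIntegrable f0 volume a b := by
    intro a b ha hb
    exact (hf0cont.mono (hsub a b ha hb)).intervalIntegrable
  set H : ℝ → ℝ := fun x => ∫ s in (0 : ℝ)..x, f0 s with hH_def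
  have hHderiv : ∀ x ∈ Set.Ioo dlow dbar, HasDerivAt H (f0 x) x := by
    intro x hx
    exact integral_hasDerivAt_right (hf0int 0 x h0d hx)
      (hf0cont.stronglyMeasurableAtFilter isOpen_Ioo x hx)
      (hf0cont.continuousAt (isOpen_Ioo.mem_nhds hx))
  -- nonnegativity of the integrand away from zero
  have hf0nonneg : ∀ s ∈ Set.Ioo dlow dbar, 0 ≤ s → 0 ≤ f0 s := by
    intro s hs hs0
    rcases eq_or_lt_of_le hs0 with h | h
    · simp [hf0_def, ← h, hg0]
    · have := hgneg s hs h; simp only [hf0_def]; linarith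
  have hf0nonpos : ∀ s ∈ Set.Ioo dlow dbar, s ≤ 0 → f0 s ≤ 0 := by
    intro s hs hs0
    rcases eq_or_lt_of_le hs0 with h | h
    · simp [hf0_def, h, hg0]
    · have := hgpos s hs h; simp only [hf0_def]; linarith
  -- H is nonnegative on (dlow, dbar)
  have hHnn : ∀ x ∈ Set.Ioo dlow dbar, 0 ≤ H x := by
    intro x hx
    rcases le_or_gt 0 x with h | h
    · apply intervalIntegral.integral_nonneg h
      intro s hs
      exact hf0nonneg s ⟨lt_of_lt_of_le hdlow hs.1, lt_of_le_of_lt hs.2 hx.2⟩ hs.1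
    · have : H x = ∫ s in x..(0 : ℝ), -(f0 s) := by
        rw [intervalIntegral.integral_neg, ← intervalIntegral.integral_symm]
      rw [this]
      apply intervalIntegral.integral_nonneg h.le
      intro s hs
      have : f0 s ≤ 0 := hf0nonpos s ⟨lt_of_lt_of_le hx.1 hs.1, lt_of_le_of_lt hs.2 hdbar⟩ hs.2
      linarith
  have hrmem : r ∈ Set.Ioo dlow dbar := ⟨lt_trans hdlow hr0, hrdbar⟩
  have hmrmem : -r ∈ Set.Ioo dlow dbar := ⟨hrdlow, by linarith⟩
  -- H is positive at r and -r
  have hHr : 0 < H r := by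
    apply intervalIntegral_pos_of_pos_on (hf0int 0 r h0d hrmem)
    · intro s hs
      have hsmem : s ∈ Set.Ioo dlow dbar := ⟨lt_trans hdlow hs.1, lt_trans hs.2 hrdbar⟩
      have := hgneg s hsmem hs.1
      simp only [hf0_def]; linarith
    · exact hr0
  have hHmr : 0 < H (-r) := by
    have heq : H (-r) = ∫ s in (-r)..(0 : ℝ), g s := by
      show (∫ s in (0:ℝ)..(-r), f0 s) = _
      rw [intervalIntegral.integral_symm]
      rw [← intervalIntegral.integral_neg]
      simp [hf0_def]
    rw [heq]
    apply intervalIntegral_pos_of_pos_on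
    · exact ((hgcont.mono (hsub (-r) 0 hmrmem h0d))).intervalIntegrable
    · intro s hs
      exact hgpos s ⟨lt_trans hrdlow hs.1, lt_trans hs.2 hdbar⟩ hs.2
    · linarith
  -- H is ≥ H r beyond r, ≥ H (-r) below -r
  have hHger : ∀ x ∈ Set.Ioo dlow dbar, r ≤ x → H r ≤ H x := by
    intro x hx hrx
    have hadd : H r + (∫ s in r..x, f0 s) = H x :=
      intervalIntegral.integral_add_adjacent_intervals (hf0int 0 r h0d hrmem)
        (hf0int r x hrmem hx)
    have hpos : 0 ≤ ∫ s in r..x, f0 s := by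
      apply intervalIntegral.integral_nonneg hrx
      intro s hs
      exact hf0nonneg s ⟨lt_trans hdlow (lt_of_lt_of_le hr0 hs.1),
        lt_of_le_of_lt hs.2 hx.2⟩ (le_trans hr0.le hs.1)
    linarith
  have hHgemr : ∀ x ∈ Set.Ioo dlow dbar, x ≤ -r → H (-r) ≤ H x := by
    intro x hx hxr
    have hadd : H x + (∫ s in x..(-r), f0 s) = H (-r) :=
      intervalIntegral.integral_add_adjacent_intervals (hf0int 0 x h0d hx)
        (hf0int x (-r) hx hmrmem)
    have hneg : (∫ s in x..(-r), f0 s) ≤ 0 := by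
      have : 0 ≤ ∫ s in x..(-r), -(f0 s) := by
        apply intervalIntegral.integral_nonneg hxr
        intro s hs
        have : f0 s ≤ 0 := hf0nonpos s ⟨lt_of_lt_of_le hx.1 hs.1,
          lt_of_le_of_lt hs.2 (by linarith)⟩ (le_trans hs.2 (by linarith))
        linarith
      rw [intervalIntegral.integral_neg] at this
      linarith
    linarith
  -- the level c
  set c : ℝ := min (1 - Real.cos r) (min (H r) (H (-r))) with hc_def
  have hcosr : Real.cos r < 1 := by
    have := Real.cos_lt_cos_of_nonneg_of_le_pi le_rfl hrπ.le hr0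
    rwa [Real.cos_zero] at this
  have hc0 : 0 < c := by
    simp only [hc_def, lt_min_iff]
    exact ⟨by linarith, hHr, hHmr⟩
  -- the main claim : small Lyapunov value forces the state into the r-box
  have hclaim : ∀ x ∈ Set.Ioo θlow θbar, ∀ y ∈ Set.Ioo dlow dbar,
      (1 - Real.cos x) + H y < c → |x| < r ∧ |y| < r := by
    intro x hx y hy hV
    have hKnn : 0 ≤ 1 - Real.cos x := by have := Real.cos_le_one x; linarith
    have hHynn : 0 ≤ H y := hHnn y hy
    constructor
    · by_contra h
      push_neg at h
      have hxπ : |x| ≤ Real.pi := by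
        rw [abs_le]; constructor <;> [linarith [hx.1]; linarith [hx.2]]
      have : Real.cos x ≤ Real.cos r := by
        rw [← Real.cos_abs]
        exact Real.cos_le_cos_of_nonneg_of_le_pi hr0.le hxπ h
      have hc1 : c ≤ 1 - Real.cos r := min_le_left _ _
      linarith
    · by_contra h
      push_neg at h
      rcases le_abs.mp h with h' | h'
      · have := hHger y hy h'
        have hc2 : c ≤ H r := le_trans (min_le_right _ _) (min_le_left _ _)
        linarith
      · have := hHgemr y hy (by linarith)
        have hc2 : c ≤ H (-r) := le_trans (min_le_right _ _) (min_le_right _ _)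
        linarith
  -- choose δ by continuity of the Lyapunov function at the origin
  have hKcont : ContinuousAt (fun x : ℝ => 1 - Real.cos x) 0 :=
    (continuous_const.sub Real.continuous_cos).continuousAt
  obtain ⟨δ1, hδ1pos, hδ1⟩ : ∃ δ1 > 0, ∀ x : ℝ, |x| < δ1 → 1 - Real.cos x < c / 2 := by
    have := Metric.continuousAt_iff.mp hKcont (c / 2) (by linarith)
    obtain ⟨δ1, hδ1pos, hδ1⟩ := this
    refine ⟨δ1, hδ1pos, fun x hx => ?_⟩
    have := hδ1 (show dist x 0 < δ1 by simpa [Real.dist_eq] using hx)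
    simp only [Real.dist_eq, Real.cos_zero, sub_zero, sub_self] at this
    calc 1 - Real.cos x ≤ |1 - Real.cos x - 0| := by
          rw [sub_zero]; exact le_abs_self _
      _ < c / 2 := by simpa using this
  obtain ⟨δ2, hδ2pos, hδ2⟩ : ∃ δ2 > 0, ∀ y : ℝ, |y| < δ2 → H y < c / 2 := by
    have hH0 : H 0 = 0 := by simp [hH_def]
    have hHcont : ContinuousAt H 0 := (hHderiv 0 h0d).continuousAt
    have := Metric.continuousAt_iff.mp hHcont (c / 2) (by linarith)
    obtain ⟨δ2, hδ2pos, hδ2⟩ := this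
    refine ⟨δ2, hδ2pos, fun y hy => ?_⟩
    have := hδ2 (show dist y 0 < δ2 by simpa [Real.dist_eq] using hy)
    rw [Real.dist_eq, hH0, sub_zero] at this
    exact lt_of_le_of_lt (le_abs_self _) this
  refine ⟨min δ1 δ2, lt_min hδ1pos hδ2pos, 0, le_rfl, 1, 1, one_pos, one_pos, ?_⟩
  intro θ d hmem hθ' hd' hinit t ht
  -- simplify the dynamics
  have hθ'' : ∀ t : ℝ, 0 ≤ t → HasDerivAt θ (F (θ t, d t)) t := by
    intro t ht; simpa using hθ' t ht
  have hd'' : ∀ t : ℝ, 0 ≤ t → HasDerivAt d (Real.sin (θ t)) t := by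
    intro t ht
    have := hd' t ht
    simpa using this
  -- the Lyapunov function along the trajectory
  set v : ℝ → ℝ := fun t => (1 - Real.cos (θ t)) + H (d t) with hv_def
  have hvderiv : ∀ t : ℝ, 0 ≤ t →
      HasDerivAt v (Real.sin (θ t) * (F (θ t, d t) - F (0, d t))) t := by
    intro t ht
    have h1 : HasDerivAt (fun t => 1 - Real.cos (θ t))
        (Real.sin (θ t) * F (θ t, d t)) t := by
      have := ((Real.hasDerivAt_cos (θ t)).comp t (hθ'' t ht)).const_sub 1
      convert this using 1
      · rfl
      · rfl
      · rfl
      · ring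
    have h2 : HasDerivAt (fun t => H (d t)) (f0 (d t) * Real.sin (θ t)) t := by
      have hdmem : d t ∈ Set.Ioo dlow dbar := (hmemX' _ (hmem t ht)).2
      exact (hHderiv (d t) hdmem).comp t (hd'' t ht)
    have := h1.add h2
    convert this using 1
    · rfl
    · rfl
    · rfl
    simp only [hf0_def, hg_def]
    ring
  -- v is antitone on [0, ∞)
  have hvanti : AntitoneOn v (Set.Ici 0) := by
    apply antitoneOn_of_deriv_nonpos (convex_Ici 0)
    · intro s hs
      exact (hvderiv s hs).continuousAt.continuousWithinAt
    · rw [interior_Ici]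
      intro s hs
      exact ((hvderiv s (le_of_lt hs)).differentiableAt).differentiableWithinAt
    · rw [interior_Ici]
      intro s hs
      rw [(hvderiv s (le_of_lt hs)).deriv]
      have hsmem := hmemX' _ (hmem s (le_of_lt hs))
      exact hkey _ hsmem.1 _ hsmem.2
  -- initial value is small
  have hv0 : v 0 < c := by
    have hθ0 : |θ 0| < δ1 := lt_of_le_of_lt (le_max_left _ _)
      (lt_of_lt_of_le hinit (min_le_left _ _))
    have hd0 : |d 0| < δ2 := lt_of_le_of_lt (le_max_right _ _)
      (lt_of_lt_of_le hinit (min_le_right _ _))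
    have := hδ1 (θ 0) hθ0
    have := hδ2 (d 0) hd0
    simp only [hv_def]
    linarith
  -- conclude
  have hvt : v t ≤ v 0 := hvanti (Set.self_mem_Ici) ht ht
  have hvtc : v t < c := lt_of_le_of_lt hvt hv0
  have htmem := hmemX' _ (hmem t ht)
  have := hclaim (θ t) htmem.1 (d t) htmem.2 hvtc
  exact lt_of_lt_of_le (max_lt this.1 this.2) hrε.le
end
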